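/- An odd positive integer n belongs to O_FS if and only if one of the following holds: (i) the multiplicative order of 2 modulo n equals φ(n); or (ii) the multiplicative order of 2 modulo n equals φ(n)/2 and, in addition, either 4 does not divide φ(n) or 2^{φ(n)/4} is not congruent to −1 modulo n. Here φ denotes Euler's totient function. -/

import Mathlib

/-- `O_FS` : odd naturals `n ≥ 1` such that `(ℤ/nℤ)*` is covered by `{±2^j : j ≥ 0}`. -/
def OFS (n : ℕ) : Prop :=
  Odd n ∧ 1 ≤ n ∧ ∀ x : ℤ, IsCoprime x (n : ℤ) →
    ∃ j : ℕ, (n : ℤ) ∣ x - 2 ^ j ∨ (n : ℤ) ∣ x + 2 ^ j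

/-- Characterization of membership in `O_FS` via the multiplicative order of `2` modulo `n`. -/
theorem OFS_characterization (n : ℕ) (hpos : 0 < n) (hodd : Odd n) :
    OFS n ↔
      orderOf (2 : ZMod n) = Nat.totient n ∨
      (orderOf (2 : ZMod n) = Nat.totient n / 2 ∧
        (¬ (4 ∣ Nat.totient n) ∨ (2 : ZMod n) ^ (Nat.totient n / 4) ≠ -1)) := by
  classical
  by_cases hn1 : n = 1
  · subst hn1
    have h2 : (2 : ZMod 1) = 1 := Subsingleton.elim _ _
    refine iff_of_true ⟨hodd, le_refl 1, fun x _ => ⟨0, Or.inl (by norm_num)⟩⟩ ?_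
    left
    rw [h2, orderOf_one, Nat.totient_one]
  have hn3 : 3 ≤ n := by
    obtain ⟨c, hc⟩ := hodd; omega
  haveI : NeZero n := ⟨hpos.ne'⟩
  have hcop : Nat.Coprime 2 n := (Nat.Prime.coprime_iff_not_dvd Nat.prime_two).mpr
    (fun hd => (Nat.not_even_iff_odd.mpr hodd) ((even_iff_two_dvd).mpr hd))
  set u : (ZMod n)ˣ := ZMod.unitOfCoprime 2 hcop with hu_def
  have hu : (u : ZMod n) = 2 := by
    rw [hu_def, ZMod.coe_unitOfCoprime]; norm_num
  set k := orderOf u with hk_def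
  have hord : orderOf (2 : ZMod n) = k := by rw [← hu, orderOf_units]
  set φ := Nat.totient n with hφ_def
  have hcard : Fintype.card (ZMod n)ˣ = φ := ZMod.card_units_eq_totient n
  have hk_pos : 0 < k := orderOf_pos u
  have hφ_even : Even φ := Nat.totient_even (by omega)
  -- casts
  have hpowcast : ∀ j : ℕ, ((u ^ j : (ZMod n)ˣ) : ZMod n) = 2 ^ j := by
    intro j; rw [Units.val_pow_eq_pow_val, hu]
  have hnegcast : ∀ j : ℕ, ((-(u ^ j) : (ZMod n)ˣ) : ZMod n) = -(2 ^ j) := by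
    intro j; rw [Units.val_neg, hpowcast]
  have hcast2 : ∀ m : ℕ, ((2 : ZMod n) ^ m = -1) ↔ u ^ m = -1 := by
    intro m
    rw [Units.ext_iff, Units.val_pow_eq_pow_val, hu, Units.val_neg, Units.val_one]
  have hne : (-1 : (ZMod n)ˣ) ≠ 1 := by
    intro h
    have h' : ((-1 : (ZMod n)ˣ) : ZMod n) = ((1 : (ZMod n)ˣ) : ZMod n) := by rw [h]
    rw [Units.val_neg, Units.val_one] at h'
    have h2 : ((2 : ℕ) : ZMod n) = 0 := by push_cast; linear_combination -h'
    have := (ZMod.natCast_eq_zero_iff 2 n).mp h2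
    have := Nat.le_of_dvd (by norm_num) this
    omega
  set E := ∃ m : ℕ, u ^ m = -1 with hE_def
  -- Step 1 : OFS ↔ covering by ± powers of u
  have step1 : OFS n ↔ ∀ y : (ZMod n)ˣ, ∃ j : ℕ, y = u ^ j ∨ y = -(u ^ j) := by
    constructor
    · rintro ⟨-, -, h⟩ y
      set x : ℤ := (((y : ZMod n).val : ℕ) : ℤ) with hx_def
      have hxy : (x : ZMod n) = (y : ZMod n) := by
        rw [hx_def]
        push_cast
        rw [ZMod.natCast_val, ZMod.cast_id]
      have hxcop : IsCoprime x (n : ℤ) := by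
        rw [Int.isCoprime_iff_gcd_eq_one]
        have h1 : IsUnit (((y : ZMod n).val : ℕ) : ZMod n) := by
          rw [ZMod.natCast_val, ZMod.cast_id]; exact y.isUnit
        have h2 := (ZMod.isUnit_iff_coprime _ n).mp h1
        rw [hx_def, Int.gcd_natCast_natCast]; exact h2
      obtain ⟨j, hj⟩ := h x hxcop
      refine ⟨j, ?_⟩
      rcases hj with hj | hj
      · left
        have h0 : ((x - 2 ^ j : ℤ) : ZMod n) = 0 :=
          (ZMod.intCast_zmod_eq_zero_iff_dvd _ n).mpr hj
        apply Units.ext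
        rw [hpowcast]
        push_cast at h0
        rw [← hxy]
        linear_combination h0
      · right
        have h0 : ((x + 2 ^ j : ℤ) : ZMod n) = 0 :=
          (ZMod.intCast_zmod_eq_zero_iff_dvd _ n).mpr hj
        apply Units.ext
        rw [hnegcast]
        push_cast at h0
        rw [← hxy]
        linear_combination h0
    · intro h
      refine ⟨hodd, hpos, fun x hx => ?_⟩
      have hxu : IsUnit ((x : ℤ) : ZMod n) := by
        obtain ⟨a, b, hab⟩ := hx
        have h1 : ((a * x + b * n : ℤ) : ZMod n) = 1 := by rw [hab]; norm_num
        push_cast at h1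
        rw [ZMod.natCast_self, mul_zero, add_zero] at h1
        exact IsUnit.of_mul_eq_one _ (by rw [mul_comm]; exact h1)
      obtain ⟨j, hj⟩ := h hxu.unit
      refine ⟨j, ?_⟩
      rcases hj with hj | hj
      · left
        rw [← ZMod.intCast_zmod_eq_zero_iff_dvd]
        have hx2 : ((x : ℤ) : ZMod n) = 2 ^ j := by
          rw [← hxu.unit_spec, hj, hpowcast]
        push_cast
        rw [hx2]; ring
      · right
        rw [← ZMod.intCast_zmod_eq_zero_iff_dvd]
        have hx2 : ((x : ℤ) : ZMod n) = -(2 ^ j) := by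
          rw [← hxu.unit_spec, hj, hnegcast]
        push_cast
        rw [hx2]; ring
  -- finsets of powers
  set T1 : Finset (ZMod n)ˣ := (Finset.range k).image (fun j => u ^ j) with hT1
  set T2 : Finset (ZMod n)ˣ := (Finset.range k).image (fun j => -(u ^ j)) with hT2
  have hT1card : T1.card = k := by
    rw [hT1, Finset.card_image_of_injOn, Finset.card_range]
    intro a ha b hb hab
    exact pow_injOn_Iio_orderOf (Finset.mem_range.mp ha) (Finset.mem_range.mp hb) hab
  have hT2card : T2.card = k := by
    rw [hT2, Finset.card_image_of_injOn, Finset.card_range]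
    intro a ha b hb hab
    have hab' : u ^ a = u ^ b := by
      have := congrArg Neg.neg hab
      simpa using this
    exact pow_injOn_Iio_orderOf (Finset.mem_range.mp ha) (Finset.mem_range.mp hb) hab'
  have hmemT1 : ∀ j : ℕ, u ^ j ∈ T1 := by
    intro j
    exact Finset.mem_image.mpr ⟨j % k, Finset.mem_range.mpr (Nat.mod_lt _ hk_pos),
      pow_mod_orderOf u j⟩
  have hmemT2 : ∀ j : ℕ, -(u ^ j) ∈ T2 := by
    intro j
    exact Finset.mem_image.mpr ⟨j % k, Finset.mem_range.mpr (Nat.mod_lt _ hk_pos),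
      by rw [pow_mod_orderOf u j]⟩
  have hSuniv : (∀ y : (ZMod n)ˣ, ∃ j : ℕ, y = u ^ j ∨ y = -(u ^ j)) ↔ T1 ∪ T2 = Finset.univ := by
    constructor
    · intro h
      apply Finset.eq_univ_of_forall
      intro y
      obtain ⟨j, hj | hj⟩ := h y
      · exact Finset.mem_union_left _ (hj ▸ hmemT1 j)
      · exact Finset.mem_union_right _ (hj ▸ hmemT2 j)
    · intro h y
      have hy : y ∈ T1 ∪ T2 := h ▸ Finset.mem_univ y
      rcases Finset.mem_union.mp hy with hy | hy
      · obtain ⟨j, -, hj⟩ := Finset.mem_image.mp hy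
        exact ⟨j, Or.inl hj.symm⟩
      · obtain ⟨j, -, hj⟩ := Finset.mem_image.mp hy
        exact ⟨j, Or.inr hj.symm⟩
  -- key: mixed equality gives E
  have key : ∀ a b : ℕ, u ^ a = -(u ^ b) → E := by
    intro a b hab
    refine ⟨a + b * (k - 1), ?_⟩
    have hbk : b + b * (k - 1) = b * k := by
      obtain ⟨k', hk'⟩ := Nat.exists_eq_succ_of_ne_zero hk_pos.ne'
      rw [hk', Nat.succ_sub_one, Nat.succ_eq_add_one]
      ring
    calc u ^ (a + b * (k - 1)) = u ^ a * u ^ (b * (k - 1)) := pow_add u _ _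
      _ = -(u ^ b) * u ^ (b * (k - 1)) := by rw [hab]
      _ = -(u ^ b * u ^ (b * (k - 1))) := by rw [neg_mul]
      _ = -(u ^ (b + b * (k - 1))) := by rw [pow_add]
      _ = -(u ^ (b * k)) := by rw [hbk]
      _ = -1 := by rw [mul_comm, pow_mul, pow_orderOf_eq_one, one_pow]
  -- E implies half-order representation (using -1 ≠ 1)
  have Ehalf : E → ∃ m : ℕ, k = 2 * m ∧ u ^ m = -1 := by
    rintro ⟨m, hm⟩
    have hm1 : u ^ m ≠ 1 := by rw [hm]; exact hne
    have h2m : u ^ (2 * m) = 1 := by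
      rw [two_mul, pow_add, hm]
      simp
    have hk2m : k ∣ m * 2 := orderOf_dvd_of_pow_eq_one (by rw [mul_comm]; exact h2m)
    have hkm : ¬ k ∣ m := fun hd => hm1 (orderOf_dvd_iff_pow_eq_one.mp hd)
    have hk_even : 2 ∣ k := by
      by_contra h2
      have hkodd : Odd k := Nat.odd_iff.mpr (by omega)
      have hcopk : Nat.Coprime k 2 :=
        Nat.Coprime.symm ((Nat.Prime.coprime_iff_not_dvd Nat.prime_two).mpr h2)
      exact hkm (hcopk.dvd_of_dvd_mul_right hk2m)
    obtain ⟨m', hm'⟩ := hk_even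
    obtain ⟨t, ht⟩ := hk2m
    have hmt : m = m' * t := by
      have h2 : m * 2 = (m' * t) * 2 := by rw [ht, hm']; ring
      omega
    have ht_odd : Odd t := by
      rcases Nat.even_or_odd t with ⟨s, hs⟩ | ho
      · exfalso; exact hkm ⟨s, by rw [hmt, hs, hm']; ring⟩
      · exact ho
    obtain ⟨s, hs⟩ := ht_odd
    refine ⟨m', hm', ?_⟩
    have hpow : u ^ m = u ^ m' := by
      have h2' : u ^ (m' * 2) = 1 := by rw [mul_comm m' 2, ← hm', pow_orderOf_eq_one]
      calc u ^ m = u ^ (m' * (2 * s + 1)) := by rw [hmt, hs]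
        _ = (u ^ m') ^ (2 * s + 1) := by rw [pow_mul]
        _ = ((u ^ m') ^ 2) ^ s * u ^ m' := by rw [pow_succ, pow_mul]
        _ = (u ^ (m' * 2)) ^ s * u ^ m' := by rw [pow_mul]
        _ = u ^ m' := by rw [h2', one_pow, one_mul]
    rw [← hpow, hm]
  -- Step 2 : covering ↔ order condition
  have step2 : (∀ y : (ZMod n)ˣ, ∃ j : ℕ, y = u ^ j ∨ y = -(u ^ j)) ↔
      ((E ∧ k = φ) ∨ (¬E ∧ 2 * k = φ)) := by
    rw [hSuniv]
    by_cases hE : E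
    · obtain ⟨m, hm⟩ := hE
      have hT12 : T2 = T1 := by
        apply Finset.Subset.antisymm
        · intro y hy
          obtain ⟨j, -, hj⟩ := Finset.mem_image.mp hy
          have : y = u ^ (m + j) := by
            rw [pow_add, hm, neg_one_mul, hj]
          rw [this]; exact hmemT1 _
        · intro y hy
          obtain ⟨j, -, hj⟩ := Finset.mem_image.mp hy
          have : y = -(u ^ (m + j)) := by
            rw [pow_add, hm, neg_one_mul, neg_neg, hj]
          rw [this]; exact hmemT2 _
      rw [hT12, Finset.union_self]
      rw [← Finset.card_eq_iff_eq_univ, hT1card, hcard]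
      constructor
      · intro h; exact Or.inl ⟨⟨m, hm⟩, h⟩
      · rintro (⟨-, h⟩ | ⟨hnE, -⟩)
        · exact h
        · exact absurd ⟨m, hm⟩ hnE
    · have hdisj : Disjoint T1 T2 := by
        rw [Finset.disjoint_left]
        intro y hy1 hy2
        obtain ⟨a, -, ha⟩ := Finset.mem_image.mp hy1
        obtain ⟨b, -, hb⟩ := Finset.mem_image.mp hy2
        exact hE (key a b (by rw [ha, hb]))
      rw [← Finset.card_eq_iff_eq_univ, Finset.card_union_of_disjoint hdisj,
        hT1card, hT2card, hcard]
      constructor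
      · intro h; exact Or.inr ⟨hE, by omega⟩
      · rintro (⟨hE', -⟩ | ⟨-, h⟩)
        · exact absurd hE' hE
        · omega
  -- conclude
  rw [step1, step2, hord]
  simp only [ne_eq, hcast2]
  constructor
  · rintro (⟨-, hk⟩ | ⟨hE, hk⟩)
    · exact Or.inl hk
    · refine Or.inr ⟨by omega, ?_⟩
      by_cases h4 : 4 ∣ φ
      · exact Or.inr (fun hc => hE ⟨φ / 4, hc⟩)
      · exact Or.inl h4
  · rintro (hk | ⟨hk, hcond⟩)
    · by_cases hE : E
      · exact Or.inl ⟨hE, hk⟩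
      · exfalso
        have hT1univ : T1 = Finset.univ := by
          rw [← Finset.card_eq_iff_eq_univ, hT1card, hcard]; exact hk
        have : (-1 : (ZMod n)ˣ) ∈ T1 := hT1univ ▸ Finset.mem_univ _
        obtain ⟨j, -, hj⟩ := Finset.mem_image.mp this
        exact hE ⟨j, hj⟩
    · by_cases hE : E
      · exfalso
        obtain ⟨m, hkm, hum⟩ := Ehalf hE
        obtain ⟨c, hc⟩ := hφ_even
        have hφ4 : φ = 4 * m := by omega
        rcases hcond with h4 | hne2
        · exact h4 ⟨m, by omega⟩
        · exact hne2 (by rw [show φ / 4 = m by omega]; exact hum)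
      · refine Or.inr ⟨hE, ?_⟩
        obtain ⟨c, hc⟩ := hφ_even
        omega
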